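/- The automorphisms σ and σ³ of sl(3,ℂ) are outer: there is no invertible 3×3 complex matrix g such that σ(X) = g X g⁻¹ for all X ∈ sl(3,ℂ), and there is no invertible 3×3 complex matrix g such that σ³(X) = g X g⁻¹ for all X ∈ sl(3,ℂ). -/

import Mathlib

open Complex Matrix

noncomputable section

abbrev M3 := Matrix (Fin 3) (Fin 3) ℂ

/-- ε = exp(iπ/3). -/
def eps : ℂ := Complex.exp (Real.pi * Complex.I / 3)

/-- The matrix P with rows (0, ε², 0), (ε⁴, 0, 0), (0, 0, 1). -/
def Pm : M3 := !![0, eps ^ 2, 0; eps ^ 4, 0, 0; 0, 0, 1]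

/-- σ(X) = −P Xᵀ P. -/
def sigmaL (X : M3) : M3 := -(Pm * Xᵀ * Pm)

lemma eps_pow_six : eps ^ 6 = 1 := by
  rw [eps, ← Complex.exp_nat_mul]
  have : ((6:ℕ) : ℂ) * (Real.pi * Complex.I / 3) = 2 * Real.pi * Complex.I := by
    push_cast; ring
  rw [this, Complex.exp_two_pi_mul_I]

def X0 : M3 := !![1, 0, 0; 0, 1, 0; 0, 0, -2]

lemma key : sigmaL X0 = -X0 := by
  have h6 : eps ^ 2 * eps ^ 4 = 1 := by rw [← pow_add]; exact eps_pow_six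
  have h6' : eps ^ 4 * eps ^ 2 = 1 := by rw [← pow_add]; exact eps_pow_six
  simp only [sigmaL, Pm, X0]
  ext i j
  fin_cases i <;> fin_cases j <;>
    simp [Matrix.mul_apply, Fin.sum_univ_three, h6, h6', Matrix.transpose_apply,
      Matrix.vecHead, Matrix.vecTail, Matrix.vecMul, dotProduct]

lemma sigmaL_neg (X : M3) : sigmaL (-X) = - sigmaL X := by
  simp [sigmaL, Matrix.mul_neg, Matrix.neg_mul]

lemma outer (f : M3 → M3) (hf : f X0 = -X0) :
    ¬ ∃ g : M3, IsUnit g ∧ ∀ X : M3, X.trace = 0 → f X = g * X * g⁻¹ := by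
  rintro ⟨g, hg, h⟩
  have htr : X0.trace = 0 := by simp [X0, Matrix.trace_fin_three]; ring
  have h0 := h X0 htr
  rw [hf] at h0
  have hdet := congrArg Matrix.det h0
  have hgd : IsUnit g.det := (Matrix.isUnit_iff_isUnit_det g).mp hg
  rw [Matrix.det_mul, Matrix.det_mul, Matrix.det_nonsing_inv] at hdet
  have hX0 : X0.det = -2 := by simp [X0, Matrix.det_fin_three]
  have hneg : (-X0).det = 2 := by simp [X0, Matrix.det_fin_three]
  rw [hneg, hX0] at hdet
  rw [mul_comm g.det (-2), mul_assoc, Ring.mul_inverse_cancel _ hgd] at hdet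
  norm_num at hdet

/-- σ and σ³ are outer automorphisms of sl(3,ℂ): they are not given by conjugation by
any invertible 3×3 complex matrix. -/
theorem statement4 :
    (¬ ∃ g : M3, IsUnit g ∧ ∀ X : M3, X.trace = 0 → sigmaL X = g * X * g⁻¹) ∧
    (¬ ∃ g : M3, IsUnit g ∧ ∀ X : M3, X.trace = 0 →
      sigmaL (sigmaL (sigmaL X)) = g * X * g⁻¹) := by
  refine ⟨outer _ key, outer _ ?_⟩
  simp [key, sigmaL_neg]
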